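/- Let n ≥ 1, let φ ∈ L^∞(𝕋^n) be nonzero, and suppose the Toeplitz operator T_φ on H²(𝔻^n) is a partial isometry. Then the range of T_φ (which is a closed subspace of H²(𝔻^n)) is invariant under multiplication by each coordinate function: z_i · ran(T_φ) ⊆ ran(T_φ) for all i = 1, …, n. -/

import Mathlib

noncomputable section

open MeasureTheory Complex Filter Topology ContinuousLinearMap

/-- The `n`-torus `𝕋^n`, with its (normalized, since `T = 1`) Haar measure. -/
abbrev Torus (n : ℕ) : Type := Fin n → UnitAddCircle

/-- The Lebesgue space `L²(𝕋^n)`. -/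
abbrev L2T (n : ℕ) : Type := Lp ℂ 2 (volume : Measure (Torus n))

/-- The character `z ↦ z^k` on the `n`-torus, `k ∈ ℤ^n`. -/
def charFn (n : ℕ) (k : Fin n → ℤ) : Torus n → ℂ := fun z => ∏ i, fourier (k i) (z i)

theorem charFn_continuous (n : ℕ) (k : Fin n → ℤ) : Continuous (charFn n k) :=
  continuous_finset_prod _ fun i _ => (map_continuous (fourier (k i))).comp (continuous_apply i)

theorem charFn_norm (n : ℕ) (k : Fin n → ℤ) (z : Torus n) : ‖charFn n k z‖ = 1 := by
  rw [charFn, norm_prod]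
  exact Finset.prod_eq_one fun i _ => Circle.norm_coe _

theorem charFn_memℒp (n : ℕ) (k : Fin n → ℤ) :
    MemLp (charFn n k) ⊤ (volume : Measure (Torus n)) :=
  memLp_top_of_bound (charFn_continuous n k).aestronglyMeasurable 1
    (Eventually.of_forall fun z => le_of_eq (charFn_norm n k z))

/-- The `k`-th Fourier coefficient `f̂(k) = ∫_{𝕋^n} (conj z^k) f(z) dm(z)`. -/
def mFourierCoeff {n : ℕ} (f : Torus n → ℂ) (k : Fin n → ℤ) : ℂ :=
  ∫ z, (starRingEnd ℂ) (charFn n k z) * f z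

theorem mFourierCoeff_congr {n : ℕ} {f g : Torus n → ℂ}
    (h : f =ᵐ[(volume : Measure (Torus n))] g) (k : Fin n → ℤ) :
    mFourierCoeff f k = mFourierCoeff g k :=
  integral_congr_ae (h.mono fun z hz => by simp only [hz])

theorem integrable_char_mul (n : ℕ) (k : Fin n → ℤ) (f : L2T n) :
    Integrable (fun z => (starRingEnd ℂ) (charFn n k z) * f z)
      (volume : Measure (Torus n)) := by
  have hf : Integrable (⇑f) (volume : Measure (Torus n)) := (Lp.memLp f).integrable one_le_two
  refine hf.bdd_mul (c := 1) ?_ (Eventually.of_forall fun z => ?_)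
  · exact (continuous_star.comp (charFn_continuous n k)).aestronglyMeasurable
  · exact le_of_eq (by rw [starRingEnd_apply, norm_star, charFn_norm])

theorem mFourierCoeff_add {n : ℕ} (k : Fin n → ℤ) (f g : L2T n) :
    mFourierCoeff (⇑(f + g)) k = mFourierCoeff (⇑f) k + mFourierCoeff (⇑g) k := by
  rw [mFourierCoeff_congr (Lp.coeFn_add f g) k]
  unfold mFourierCoeff
  simp only [Pi.add_apply, mul_add]
  exact integral_add (integrable_char_mul n k f) (integrable_char_mul n k g)

theorem mFourierCoeff_smul {n : ℕ} (k : Fin n → ℤ) (c : ℂ) (f : L2T n) :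
    mFourierCoeff (⇑(c • f)) k = c * mFourierCoeff (⇑f) k := by
  rw [mFourierCoeff_congr (Lp.coeFn_smul c f) k]
  unfold mFourierCoeff
  have : (fun z => (starRingEnd ℂ) (charFn n k z) * (c • ⇑f) z) =
      fun z => c • ((starRingEnd ℂ) (charFn n k z) * f z) := by
    funext z; simp only [Pi.smul_apply, smul_eq_mul]; ring
  rw [this, integral_smul, smul_eq_mul]

/-- All Fourier coefficients with some negative index vanish (membership in the "analytic"
part, e.g. `H²(𝕋^n)` resp. `H^∞(𝔻^n)` for `L²` resp. `L^∞` functions). -/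
def IsAnalyticSymbol {n : ℕ} (φ : Torus n → ℂ) : Prop :=
  ∀ k : Fin n → ℤ, (∃ i, k i < 0) → mFourierCoeff φ k = 0

/-- `φ ∈ H^∞(𝔻^n) = L^∞(𝕋^n) ∩ H²(𝕋^n)`. -/
def IsHinfty {n : ℕ} (φ : Torus n → ℂ) : Prop :=
  MemLp φ ⊤ (volume : Measure (Torus n)) ∧ IsAnalyticSymbol φ

/-- `φ` is an inner function in `H^∞(𝔻^n)`: it is in `H^∞` and unimodular a.e. on `𝕋^n`. -/
def IsInnerFn {n : ℕ} (φ : Torus n → ℂ) : Prop :=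
  IsHinfty φ ∧ ∀ᵐ z ∂(volume : Measure (Torus n)), ‖φ z‖ = 1

/-- `φ` depends only on the variables in `A`: `φ̂(k) = 0` whenever `k j ≠ 0` for some `j ∉ A`. -/
def DependsOnlyOn {n : ℕ} (φ : Torus n → ℂ) (A : Set (Fin n)) : Prop :=
  ∀ k : Fin n → ℤ, (∃ j, j ∉ A ∧ k j ≠ 0) → mFourierCoeff φ k = 0

/-- The Hardy space `H²(𝔻^n) ≅ H²(𝕋^n)` as a subspace of `L²(𝕋^n)`. -/
def hardySpace (n : ℕ) : Submodule ℂ (L2T n) where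
  carrier := {f : L2T n | ∀ k : Fin n → ℤ, (∃ i, k i < 0) → mFourierCoeff (⇑f) k = 0}
  add_mem' := by
    intro a b ha hb k hk
    rw [mFourierCoeff_add k a b, ha k hk, hb k hk, add_zero]
  zero_mem' := by
    intro k hk
    rw [mFourierCoeff_congr (Lp.coeFn_zero ℂ 2 (volume : Measure (Torus _))) k]
    simp [mFourierCoeff]
  smul_mem' := by
    intro c a ha k hk
    rw [mFourierCoeff_smul k c a, ha k hk, mul_zero]

/-- The character `z^k` as an element of `L²(𝕋^n)`. -/
def charLp2 (n : ℕ) (k : Fin n → ℤ) : L2T n :=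
  MemLp.toLp (charFn n k) ((charFn_memℒp n k).mono_exponent le_top)

theorem mFourierCoeff_eq_inner (n : ℕ) (k : Fin n → ℤ) (f : L2T n) :
    mFourierCoeff (⇑f) k = @inner ℂ _ _ (charLp2 n k) f := by
  rw [mFourierCoeff, MeasureTheory.L2.inner_def]
  apply integral_congr_ae
  have hcoe : ⇑(charLp2 n k) =ᵐ[(volume : Measure (Torus n))] charFn n k :=
    MemLp.coeFn_toLp _
  filter_upwards [hcoe] with z hz
  rw [RCLike.inner_apply, hz, mul_comm]

theorem hardySpace_isClosed (n : ℕ) :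
    IsClosed ((hardySpace n : Submodule ℂ (L2T n)) : Set (L2T n)) := by
  have h : ((hardySpace n : Submodule ℂ (L2T n)) : Set (L2T n)) =
      ⋂ k ∈ {k : Fin n → ℤ | ∃ i, k i < 0},
        {f : L2T n | @inner ℂ _ _ (charLp2 n k) f = 0} := by
    ext f
    simp only [Set.mem_iInter, Set.mem_setOf_eq, SetLike.mem_coe]
    constructor
    · intro hf k hk
      rw [← mFourierCoeff_eq_inner]; exact hf k hk
    · intro hf k hk
      rw [mFourierCoeff_eq_inner]; exact hf k hk
  rw [h]
  exact isClosed_biInter fun k _ =>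
    isClosed_eq (Continuous.inner continuous_const continuous_id) continuous_const

instance hardySpace_completeSpace (n : ℕ) : CompleteSpace (hardySpace n) :=
  (hardySpace_isClosed n).completeSpace_coe

/-- The Hardy space as a Hilbert space. -/
abbrev HardyH (n : ℕ) := ↥(hardySpace n)

/-- The representative function of an element of the Hardy space. -/
def repFn {n : ℕ} (f : HardyH n) : Torus n → ℂ := ⇑(f : L2T n)

theorem mul_memℒp {n : ℕ} {φ : Torus n → ℂ} (hφ : MemLp φ ⊤ (volume : Measure (Torus n)))
    (f : L2T n) : MemLp (fun z => φ z * f z) 2 (volume : Measure (Torus n)) := by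
  exact (Lp.memLp f).mul' hφ

/-- Multiplication by `φ ∈ L^∞(𝕋^n)` as a map on `L²(𝕋^n)`. -/
def mulL2 {n : ℕ} (φ : Torus n → ℂ) (hφ : MemLp φ ⊤ (volume : Measure (Torus n)))
    (f : L2T n) : L2T n :=
  MemLp.toLp (fun z => φ z * f z) (mul_memℒp hφ f)

/-- `IsToeplitz φ hφ T` : `T` is the Toeplitz operator on `H²(𝔻^n)` with symbol
`φ ∈ L^∞(𝕋^n)`, i.e. `T f = P(φ f)` where `P` is the orthogonal projection onto `H²`. -/
def IsToeplitz {n : ℕ} (φ : Torus n → ℂ) (hφ : MemLp φ ⊤ (volume : Measure (Torus n)))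
    (T : HardyH n →L[ℂ] HardyH n) : Prop :=
  ∀ f : HardyH n, T f = (hardySpace n).orthogonalProjectionOnto (mulL2 φ hφ (f : L2T n))

/-- `IsMulOp φ T` : `T` is the multiplication operator `M_φ` on `H²(𝔻^n)`. -/
def IsMulOp {n : ℕ} (φ : Torus n → ℂ) (T : HardyH n →L[ℂ] HardyH n) : Prop :=
  ∀ f : HardyH n, repFn (T f) =ᵐ[(volume : Measure (Torus n))] fun z => φ z * repFn f z

/-- A bounded operator is a partial isometry if it is isometric on the orthogonal
complement of its kernel. -/
def IsPartialIsometryOp {E F : Type*} [NormedAddCommGroup E] [InnerProductSpace ℂ E]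
    [NormedAddCommGroup F] [NormedSpace ℂ F] (T : E →L[ℂ] F) : Prop :=
  ∀ x ∈ (LinearMap.ker (T : E →ₗ[ℂ] F))ᗮ, ‖T x‖ = ‖x‖

/-- Hyponormality: `T*T - TT* ≥ 0`. -/
def IsHyponormal {H : Type*} [NormedAddCommGroup H] [InnerProductSpace ℂ H] [CompleteSpace H]
    (T : H →L[ℂ] H) : Prop :=
  (ContinuousLinearMap.adjoint T ∘L T - T ∘L ContinuousLinearMap.adjoint T).IsPositive

/-- A shift: an isometry whose adjoint powers tend to `0` strongly. -/
def IsShiftOp {H : Type*} [NormedAddCommGroup H] [InnerProductSpace ℂ H] [CompleteSpace H]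
    (V : H →L[ℂ] H) : Prop :=
  Isometry V ∧ ∀ x : H, Tendsto (fun m : ℕ => ((ContinuousLinearMap.adjoint V) ^ m) x) atTop (nhds 0)

/-- `g ∈ θ · H²(𝔻^n)`, i.e. `g = θ h` a.e. for some `h ∈ H²(𝔻^n)`. -/
def InMulRange {n : ℕ} (θ : Torus n → ℂ) (g : HardyH n) : Prop :=
  ∃ h : HardyH n, repFn g =ᵐ[(volume : Measure (Torus n))] fun z => θ z * repFn h z

/-- `P` is the orthogonal projection of `H²(𝔻^n)` onto `θ H²(𝔻^n)`. -/
def IsOrthProjOntoMul {n : ℕ} (P : HardyH n →L[ℂ] HardyH n) (θ : Torus n → ℂ) : Prop :=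
  IsIdempotentElem P ∧ IsSelfAdjoint P ∧
    ∀ g : HardyH n, g ∈ LinearMap.range (P : HardyH n →ₗ[ℂ] HardyH n) ↔ InMulRange θ g

namespace Stmt7Aux

variable {n : ℕ}

theorem coeFn_mulL2 (φ : Torus n → ℂ) (hφ : MemLp φ ⊤ (volume : Measure (Torus n)))
    (f : L2T n) :
    ⇑(mulL2 φ hφ f) =ᵐ[(volume : Measure (Torus n))] fun z => φ z * f z :=
  MemLp.coeFn_toLp _

theorem charFn_mul (k k' : Fin n → ℤ) (z : Torus n) :
    charFn n k z * charFn n k' z = charFn n (k + k') z := by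
  rw [charFn, charFn, charFn, ← Finset.prod_mul_distrib]
  exact Finset.prod_congr rfl fun i _ => by rw [Pi.add_apply, fourier_add]

theorem charFn_conj (k : Fin n → ℤ) (z : Torus n) :
    (starRingEnd ℂ) (charFn n k z) = charFn n (-k) z := by
  rw [charFn, charFn, map_prod]
  exact Finset.prod_congr rfl fun i _ => by rw [Pi.neg_apply, fourier_neg]

/-- The symbol `z_i`. -/
abbrev chi (n : ℕ) (i : Fin n) : Torus n → ℂ := charFn n (Pi.single i 1)

theorem chi_conj_mul_self (i : Fin n) (z : Torus n) :
    (starRingEnd ℂ) (chi n i z) * chi n i z = 1 := by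
  rw [RCLike.conj_mul, charFn_norm]
  norm_num

theorem mFourierCoeff_mulChi (i : Fin n) (f : L2T n) (k : Fin n → ℤ) :
    mFourierCoeff (⇑(mulL2 (chi n i) (charFn_memℒp n (Pi.single i 1)) f)) k
      = mFourierCoeff (⇑f) (k - Pi.single i 1) := by
  rw [mFourierCoeff_congr (coeFn_mulL2 _ _ f) k]
  unfold mFourierCoeff
  refine integral_congr_ae (Eventually.of_forall fun z => ?_)
  have h : (starRingEnd ℂ) (charFn n k z) * chi n i z
      = (starRingEnd ℂ) (charFn n (k - Pi.single i 1) z) := by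
    rw [charFn_conj, charFn_conj, charFn_mul]
    congr 1
    funext j
    simp only [Pi.add_apply, Pi.neg_apply, Pi.sub_apply]
    ring
  calc (starRingEnd ℂ) (charFn n k z) * (chi n i z * f z)
      = ((starRingEnd ℂ) (charFn n k z) * chi n i z) * f z := by ring
    _ = (starRingEnd ℂ) (charFn n (k - Pi.single i 1) z) * f z := by rw [h]

theorem mulChi_mem (i : Fin n) (f : L2T n) (hf : f ∈ hardySpace n) :
    mulL2 (chi n i) (charFn_memℒp n (Pi.single i 1)) f ∈ hardySpace n := by
  intro k hk
  rw [mFourierCoeff_mulChi]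
  obtain ⟨j, hj⟩ := hk
  refine hf _ ⟨j, ?_⟩
  show k j - (Pi.single i 1 : Fin n → ℤ) j < 0
  have h0 : (0:ℤ) ≤ (Pi.single i 1 : Fin n → ℤ) j := by
    classical
    by_cases h : j = i
    · subst h; rw [Pi.single_eq_same]; norm_num
    · rw [Pi.single_eq_of_ne h]
  omega

theorem inner_mulChi (i : Fin n) (f g : L2T n) :
    (inner ℂ (mulL2 (chi n i) (charFn_memℒp n (Pi.single i 1)) f)
      (mulL2 (chi n i) (charFn_memℒp n (Pi.single i 1)) g) : ℂ) = inner ℂ f g := by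
  rw [MeasureTheory.L2.inner_def, MeasureTheory.L2.inner_def]
  refine integral_congr_ae ?_
  filter_upwards [coeFn_mulL2 (chi n i) (charFn_memℒp n (Pi.single i 1)) f,
    coeFn_mulL2 (chi n i) (charFn_memℒp n (Pi.single i 1)) g] with z h1 h2
  rw [h1, h2]
  simp only [RCLike.inner_apply, map_mul]
  have hu := chi_conj_mul_self i z
  linear_combination (g z * (starRingEnd ℂ) (f z)) * hu

theorem inner_mulChi_mulL2 (i : Fin n) (φ : Torus n → ℂ)
    (hφ : MemLp φ ⊤ (volume : Measure (Torus n))) (f g : L2T n) :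
    (inner ℂ (mulL2 (chi n i) (charFn_memℒp n (Pi.single i 1)) f)
      (mulL2 φ hφ (mulL2 (chi n i) (charFn_memℒp n (Pi.single i 1)) g)) : ℂ)
      = inner ℂ f (mulL2 φ hφ g) := by
  rw [MeasureTheory.L2.inner_def, MeasureTheory.L2.inner_def]
  refine integral_congr_ae ?_
  filter_upwards [coeFn_mulL2 (chi n i) (charFn_memℒp n (Pi.single i 1)) f,
    coeFn_mulL2 φ hφ (mulL2 (chi n i) (charFn_memℒp n (Pi.single i 1)) g),
    coeFn_mulL2 (chi n i) (charFn_memℒp n (Pi.single i 1)) g,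
    coeFn_mulL2 φ hφ g] with z h1 h2 h3 h4
  rw [h1, h2, h3, h4]
  simp only [RCLike.inner_apply, map_mul]
  have hu := chi_conj_mul_self i z
  linear_combination (φ z * g z * (starRingEnd ℂ) (f z)) * hu

/-- Multiplication by `z_i` as a linear map on the Hardy space. -/
def shiftL (n : ℕ) (i : Fin n) : HardyH n →ₗ[ℂ] HardyH n where
  toFun f := ⟨mulL2 (chi n i) (charFn_memℒp n (Pi.single i 1)) (f : L2T n),
    mulChi_mem i _ f.2⟩
  map_add' f g := by
    apply Subtype.ext
    show mulL2 (chi n i) (charFn_memℒp n (Pi.single i 1)) ((↑(f + g) : L2T n))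
      = mulL2 (chi n i) (charFn_memℒp n (Pi.single i 1)) (f : L2T n)
        + mulL2 (chi n i) (charFn_memℒp n (Pi.single i 1)) (g : L2T n)
    have hcoe : ((↑(f + g) : L2T n)) = (f : L2T n) + (g : L2T n) := rfl
    rw [hcoe]
    apply Lp.ext
    filter_upwards [coeFn_mulL2 (chi n i) (charFn_memℒp n (Pi.single i 1))
        ((f : L2T n) + (g : L2T n)),
      coeFn_mulL2 (chi n i) (charFn_memℒp n (Pi.single i 1)) (f : L2T n),
      coeFn_mulL2 (chi n i) (charFn_memℒp n (Pi.single i 1)) (g : L2T n),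
      Lp.coeFn_add ((f : L2T n)) ((g : L2T n)),
      Lp.coeFn_add (mulL2 (chi n i) (charFn_memℒp n (Pi.single i 1)) (f : L2T n))
        (mulL2 (chi n i) (charFn_memℒp n (Pi.single i 1)) (g : L2T n))]
      with z h1 h2 h3 h4 h5
    simp only [h1, h5, Pi.add_apply, h2, h3, h4, mul_add]
  map_smul' c f := by
    apply Subtype.ext
    show mulL2 (chi n i) (charFn_memℒp n (Pi.single i 1)) ((↑(c • f) : L2T n))
      = c • mulL2 (chi n i) (charFn_memℒp n (Pi.single i 1)) (f : L2T n)
    have hcoe : ((↑(c • f) : L2T n)) = c • (f : L2T n) := rfl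
    rw [hcoe]
    apply Lp.ext
    filter_upwards [coeFn_mulL2 (chi n i) (charFn_memℒp n (Pi.single i 1))
        (c • (f : L2T n)),
      coeFn_mulL2 (chi n i) (charFn_memℒp n (Pi.single i 1)) (f : L2T n),
      Lp.coeFn_smul c ((f : L2T n)),
      Lp.coeFn_smul c (mulL2 (chi n i) (charFn_memℒp n (Pi.single i 1)) (f : L2T n))]
      with z h1 h2 h3 h4
    simp only [h1, h4, Pi.smul_apply, h2, h3, smul_eq_mul]
    ring

theorem norm_shiftL (i : Fin n) (f : HardyH n) : ‖shiftL n i f‖ = ‖f‖ := by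
  rw [Submodule.coe_norm, Submodule.coe_norm]
  show ‖mulL2 (chi n i) (charFn_memℒp n (Pi.single i 1)) (f : L2T n)‖ = ‖(f : L2T n)‖
  rw [norm_eq_sqrt_re_inner (𝕜 := ℂ), norm_eq_sqrt_re_inner (𝕜 := ℂ), inner_mulChi]

/-- Multiplication by `z_i` as a continuous linear map on the Hardy space. -/
def shiftV (n : ℕ) (i : Fin n) : HardyH n →L[ℂ] HardyH n :=
  LinearMap.mkContinuous (shiftL n i) 1 fun f => by rw [norm_shiftL, one_mul]

theorem shiftV_coe (i : Fin n) (f : HardyH n) :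
    ((shiftV n i f : HardyH n) : L2T n)
      = mulL2 (chi n i) (charFn_memℒp n (Pi.single i 1)) (f : L2T n) := rfl

theorem norm_shiftV (i : Fin n) (f : HardyH n) : ‖shiftV n i f‖ = ‖f‖ := norm_shiftL i f

theorem adjoint_le_of_le {E : Type*} [NormedAddCommGroup E] [InnerProductSpace ℂ E]
    [CompleteSpace E] (A : E →L[ℂ] E) (hA : ∀ x, ‖A x‖ ≤ ‖x‖) (y : E) :
    ‖ContinuousLinearMap.adjoint A y‖ ≤ ‖y‖ := by
  have h1 : ‖ContinuousLinearMap.adjoint A y‖ ^ 2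
      = RCLike.re (inner ℂ (ContinuousLinearMap.adjoint A y)
        (ContinuousLinearMap.adjoint A y) : ℂ) :=
    (inner_self_eq_norm_sq (𝕜 := ℂ) _).symm
  have h2 : (inner ℂ (ContinuousLinearMap.adjoint A y) (ContinuousLinearMap.adjoint A y) : ℂ)
      = inner ℂ y (A (ContinuousLinearMap.adjoint A y)) :=
    ContinuousLinearMap.adjoint_inner_left A (ContinuousLinearMap.adjoint A y) y
  have h3 : RCLike.re (inner ℂ y (A (ContinuousLinearMap.adjoint A y)) : ℂ)
      ≤ ‖y‖ * ‖A (ContinuousLinearMap.adjoint A y)‖ := re_inner_le_norm _ _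
  have h4 : ‖A (ContinuousLinearMap.adjoint A y)‖ ≤ ‖ContinuousLinearMap.adjoint A y‖ := hA _
  have h5 : ‖ContinuousLinearMap.adjoint A y‖ ^ 2
      ≤ ‖y‖ * ‖ContinuousLinearMap.adjoint A y‖ := by
    rw [h1, h2]
    exact le_trans h3 (mul_le_mul_of_nonneg_left h4 (norm_nonneg _))
  rcases eq_or_lt_of_le (norm_nonneg (ContinuousLinearMap.adjoint A y)) with h | h
  · rw [← h]; exact norm_nonneg _
  · nlinarith

/-- The restriction of a partial isometry to the orthogonal complement of its kernel,
as a linear isometry. -/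
def restrictIso {E : Type*} [NormedAddCommGroup E] [InnerProductSpace ℂ E]
    (T : E →L[ℂ] E) (hPI : IsPartialIsometryOp T) : (LinearMap.ker (T : E →ₗ[ℂ] E))ᗮ →ₗᵢ[ℂ] E where
  toLinearMap := (T : E →ₗ[ℂ] E).comp (LinearMap.ker (T : E →ₗ[ℂ] E))ᗮ.subtype
  norm_map' := fun x => hPI x x.2

theorem restrictIso_apply {E : Type*} [NormedAddCommGroup E] [InnerProductSpace ℂ E]
    (T : E →L[ℂ] E) (hPI : IsPartialIsometryOp T) (x : (LinearMap.ker (T : E →ₗ[ℂ] E))ᗮ) :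
    restrictIso T hPI x = T x := rfl

/-- A partial isometry `T` satisfies `T T* T = T` and is a contraction. -/
theorem partialIsometry_facts {E : Type*} [NormedAddCommGroup E] [InnerProductSpace ℂ E]
    [CompleteSpace E] (T : E →L[ℂ] E) (hPI : IsPartialIsometryOp T) :
    (∀ x, T (ContinuousLinearMap.adjoint T (T x)) = T x) ∧ (∀ x, ‖T x‖ ≤ ‖x‖) := by
  haveI : CompleteSpace (LinearMap.ker (T : E →ₗ[ℂ] E)) :=
    (ContinuousLinearMap.isClosed_ker T).completeSpace_coe
  have hsub : ∀ x : E, x - (LinearMap.ker (T : E →ₗ[ℂ] E))ᗮ.orthogonalProjectionOnto x ∈ LinearMap.ker (T : E →ₗ[ℂ] E) := by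
    intro x
    have h := Submodule.sub_starProjection_mem_orthogonal (K := (LinearMap.ker (T : E →ₗ[ℂ] E))ᗮ) x
    rwa [Submodule.orthogonal_orthogonal] at h
  have hTproj : ∀ x : E, T x = T ((LinearMap.ker (T : E →ₗ[ℂ] E))ᗮ.orthogonalProjectionOnto x) := by
    intro x
    have h := hsub x
    rw [LinearMap.mem_ker, map_sub] at h
    exact sub_eq_zero.mp h
  have key : ∀ x : E, ContinuousLinearMap.adjoint T (T x)
      = ((LinearMap.ker (T : E →ₗ[ℂ] E))ᗮ.orthogonalProjectionOnto x : E) := by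
    intro x
    refine ext_inner_right ℂ fun y => ?_
    have h1 : (inner ℂ (ContinuousLinearMap.adjoint T (T x)) y : ℂ) = inner ℂ (T x) (T y) :=
      ContinuousLinearMap.adjoint_inner_left T y (T x)
    rw [h1, hTproj x, hTproj y]
    have h2 : (inner ℂ (T ((LinearMap.ker (T : E →ₗ[ℂ] E))ᗮ.orthogonalProjectionOnto x : E))
        (T ((LinearMap.ker (T : E →ₗ[ℂ] E))ᗮ.orthogonalProjectionOnto y : E)) : ℂ)
        = inner ℂ ((LinearMap.ker (T : E →ₗ[ℂ] E))ᗮ.orthogonalProjectionOnto x)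
            ((LinearMap.ker (T : E →ₗ[ℂ] E))ᗮ.orthogonalProjectionOnto y) := by
      have h := (restrictIso T hPI).inner_map_map
        ((LinearMap.ker (T : E →ₗ[ℂ] E))ᗮ.orthogonalProjectionOnto x)
        ((LinearMap.ker (T : E →ₗ[ℂ] E))ᗮ.orthogonalProjectionOnto y)
      rw [restrictIso_apply, restrictIso_apply] at h
      exact h
    rw [h2, Submodule.coe_inner]
    have h3 : (inner ℂ (((LinearMap.ker (T : E →ₗ[ℂ] E))ᗮ.orthogonalProjectionOnto x : E))
        (y - (LinearMap.ker (T : E →ₗ[ℂ] E))ᗮ.orthogonalProjectionOnto y) : ℂ) = 0 :=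
      (Submodule.mem_orthogonal _ _).1 (Submodule.sub_starProjection_mem_orthogonal y) _
        ((LinearMap.ker (T : E →ₗ[ℂ] E))ᗮ.orthogonalProjectionOnto x).2
    rw [inner_sub_right] at h3
    linear_combination -h3
  constructor
  · intro x
    rw [key x, ← hTproj x]
  · intro x
    rw [hTproj x, hPI _ ((LinearMap.ker (T : E →ₗ[ℂ] E))ᗮ.orthogonalProjectionOnto x).2]
    calc ‖(((LinearMap.ker (T : E →ₗ[ℂ] E))ᗮ.orthogonalProjectionOnto x : (LinearMap.ker (T : E →ₗ[ℂ] E))ᗮ) : _)‖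
        = ‖(LinearMap.ker (T : E →ₗ[ℂ] E))ᗮ.orthogonalProjectionOnto x‖ := rfl
      _ ≤ ‖((LinearMap.ker (T : E →ₗ[ℂ] E))ᗮ.orthogonalProjectionOnto : E →L[ℂ] (LinearMap.ker (T : E →ₗ[ℂ] E))ᗮ)‖ * ‖x‖ :=
          ContinuousLinearMap.le_opNorm _ _
      _ ≤ 1 * ‖x‖ := mul_le_mul_of_nonneg_right (Submodule.orthogonalProjectionOnto_norm_le _) (norm_nonneg _)
      _ = ‖x‖ := one_mul _

theorem inner_orthProj (x : HardyH n) (w : L2T n) :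
    (inner ℂ (x : L2T n) (((hardySpace n).orthogonalProjectionOnto w : HardyH n) : L2T n) : ℂ)
      = inner ℂ (x : L2T n) w := by
  have h : (inner ℂ (x : L2T n) (w - ((hardySpace n).orthogonalProjectionOnto w : L2T n)) : ℂ) = 0 :=
    (Submodule.mem_orthogonal _ _).1
      (Submodule.sub_starProjection_mem_orthogonal (K := hardySpace n) w) _ x.2
  rw [inner_sub_right] at h
  linear_combination -h

theorem toeplitz_inner {φ : Torus n → ℂ} {hφ : MemLp φ ⊤ (volume : Measure (Torus n))}
    {T : HardyH n →L[ℂ] HardyH n} (hT : IsToeplitz φ hφ T) (x y : HardyH n) :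
    (inner ℂ (ContinuousLinearMap.adjoint T x) y : ℂ)
      = inner ℂ (x : L2T n) (mulL2 φ hφ (y : L2T n)) := by
  rw [ContinuousLinearMap.adjoint_inner_left T y x, hT y, Submodule.coe_inner]
  exact inner_orthProj x _

theorem adjoint_transfer {φ : Torus n → ℂ} {hφ : MemLp φ ⊤ (volume : Measure (Torus n))}
    {T : HardyH n →L[ℂ] HardyH n} (hT : IsToeplitz φ hφ T) (i : Fin n) (x : HardyH n) :
    ContinuousLinearMap.adjoint T x
      = ContinuousLinearMap.adjoint (shiftV n i)
          (ContinuousLinearMap.adjoint T (shiftV n i x)) := by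
  refine ext_inner_right ℂ fun y => ?_
  rw [ContinuousLinearMap.adjoint_inner_left (shiftV n i) y
    (ContinuousLinearMap.adjoint T (shiftV n i x))]
  rw [toeplitz_inner hT x y, toeplitz_inner hT (shiftV n i x) (shiftV n i y)]
  rw [shiftV_coe, shiftV_coe]
  exact (inner_mulChi_mulL2 i φ hφ _ _).symm

end Stmt7Aux

set_option maxHeartbeats 1000000 in
/-- Lemma 3.1. If `T_φ` is a partial isometry, then its (closed) range is
invariant under multiplication by each coordinate function `z_i`. -/
theorem stmt7 (n : ℕ) (hn : 1 ≤ n) (φ : Torus n → ℂ)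
    (hφ : MemLp φ ⊤ (volume : Measure (Torus n)))
    (hφ0 : ¬ φ =ᵐ[(volume : Measure (Torus n))] (0 : Torus n → ℂ))
    (T : HardyH n →L[ℂ] HardyH n) (hT : IsToeplitz φ hφ T)
    (hPI : IsPartialIsometryOp T) :
    ∀ g : HardyH n, g ∈ LinearMap.range (T : HardyH n →ₗ[ℂ] HardyH n) → ∀ i : Fin n,
      ∃ h : HardyH n, h ∈ LinearMap.range (T : HardyH n →ₗ[ℂ] HardyH n) ∧
        (h : L2T n) = mulL2 (charFn n (Pi.single i 1)) (charFn_memℒp n (Pi.single i 1))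
          (g : L2T n) := by
  intro g hg i
  obtain ⟨f, hf⟩ := hg
  obtain ⟨hTTT, hTle⟩ := Stmt7Aux.partialIsometry_facts T hPI
  have hSle : ∀ x, ‖ContinuousLinearMap.adjoint T x‖ ≤ ‖x‖ :=
    Stmt7Aux.adjoint_le_of_le T hTle
  have hVle : ∀ x : HardyH n, ‖Stmt7Aux.shiftV n i x‖ ≤ ‖x‖ := fun x =>
    le_of_eq (Stmt7Aux.norm_shiftV i x)
  have hVadj : ∀ x, ‖ContinuousLinearMap.adjoint (Stmt7Aux.shiftV n i) x‖ ≤ ‖x‖ :=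
    Stmt7Aux.adjoint_le_of_le _ hVle
  have hQg : T (ContinuousLinearMap.adjoint T g) = g := by rw [← hf]; exact hTTT f
  have e1 : ‖ContinuousLinearMap.adjoint T g‖ ^ 2 = ‖g‖ ^ 2 := by
    have h : (inner ℂ (ContinuousLinearMap.adjoint T g) (ContinuousLinearMap.adjoint T g) : ℂ)
        = inner ℂ g (T (ContinuousLinearMap.adjoint T g)) :=
      ContinuousLinearMap.adjoint_inner_left T (ContinuousLinearMap.adjoint T g) g
    rw [hQg] at h
    rw [← inner_self_eq_norm_sq (𝕜 := ℂ), ← inner_self_eq_norm_sq (𝕜 := ℂ), h]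
  have e1' : ‖ContinuousLinearMap.adjoint T g‖ = ‖g‖ :=
    (sq_eq_sq₀ (norm_nonneg _) (norm_nonneg _)).mp e1
  have e4 : ‖Stmt7Aux.shiftV n i g‖ = ‖g‖ := Stmt7Aux.norm_shiftV i g
  have e2 : ‖g‖ ≤ ‖ContinuousLinearMap.adjoint T (Stmt7Aux.shiftV n i g)‖ := by
    rw [← e1', Stmt7Aux.adjoint_transfer hT i g]
    exact hVadj _
  have e3 : ‖ContinuousLinearMap.adjoint T (Stmt7Aux.shiftV n i g)‖
      ≤ ‖Stmt7Aux.shiftV n i g‖ := hSle _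
  have e5 : ‖ContinuousLinearMap.adjoint T (Stmt7Aux.shiftV n i g)‖
      = ‖Stmt7Aux.shiftV n i g‖ := by
    refine le_antisymm e3 ?_
    rw [e4]
    exact e2
  have h6 : RCLike.re (inner ℂ (Stmt7Aux.shiftV n i g)
      (T (ContinuousLinearMap.adjoint T (Stmt7Aux.shiftV n i g))) : ℂ)
      = ‖Stmt7Aux.shiftV n i g‖ ^ 2 := by
    rw [← ContinuousLinearMap.adjoint_inner_left T
      (ContinuousLinearMap.adjoint T (Stmt7Aux.shiftV n i g)) (Stmt7Aux.shiftV n i g)]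
    rw [inner_self_eq_norm_sq (𝕜 := ℂ), e5]
  have h7 : ‖T (ContinuousLinearMap.adjoint T (Stmt7Aux.shiftV n i g))‖
      ≤ ‖Stmt7Aux.shiftV n i g‖ := le_trans (hTle _) e3
  have h8 := norm_sub_sq (𝕜 := ℂ) (Stmt7Aux.shiftV n i g)
    (T (ContinuousLinearMap.adjoint T (Stmt7Aux.shiftV n i g)))
  have h9 : ‖Stmt7Aux.shiftV n i g
      - T (ContinuousLinearMap.adjoint T (Stmt7Aux.shiftV n i g))‖ ^ 2 = 0 := by
    refine le_antisymm ?_ (sq_nonneg _)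
    rw [h8, h6]
    nlinarith [h7, norm_nonneg (T (ContinuousLinearMap.adjoint T (Stmt7Aux.shiftV n i g))),
      norm_nonneg (Stmt7Aux.shiftV n i g)]
  have hyw : Stmt7Aux.shiftV n i g
      = T (ContinuousLinearMap.adjoint T (Stmt7Aux.shiftV n i g)) :=
    sub_eq_zero.mp (norm_eq_zero.mp (sq_eq_zero_iff.mp h9))
  refine ⟨Stmt7Aux.shiftV n i g, ?_, ?_⟩
  · exact LinearMap.mem_range.mpr
      ⟨ContinuousLinearMap.adjoint T (Stmt7Aux.shiftV n i g), hyw.symm⟩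
  · exact Stmt7Aux.shiftV_coe i g

end
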